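/- Let V : [0, ∞) → ℝ be differentiable with V(t) ≥ 0 for all t ≥ 0, and suppose there exist constants κ₁ > 0, κ₂ > 0, ι > 2, C ≥ 0, and θ ∈ (0, 1) such that V′(t) ≤ −κ₁·V(t)^{1/2} − κ₂·V(t)^{ι/2} + C for all t ≥ 0. Define the residual level Δ = max( (C/(θ·κ₁))², (C/(θ·κ₂))^{2/ι} ) and the time bound T = 2/((1−θ)·κ₁) + 2/((1−θ)·κ₂·(ι/2 − 1)). Then for all t ≥ T, V(t) ≤ Δ; in particular T does not depend on the initial value V(0). -/

import Mathlib

open Filter Topology Set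

set_option maxHeartbeats 1000000

/-- **Theorem (fixed-time comparison lemma).** Let `V : [0,∞) → ℝ` be
differentiable and nonnegative, and suppose there are constants `κ₁, κ₂ > 0`,
`ι > 2`, `C ≥ 0`, `θ ∈ (0,1)` with
`V'(t) ≤ -κ₁ V(t)^{1/2} - κ₂ V(t)^{ι/2} + C` for all `t ≥ 0`.
With the residual level `Δ = max ((C/(θκ₁))², (C/(θκ₂))^{2/ι})` and the fixed
time `T = 2/((1-θ)κ₁) + 2/((1-θ)κ₂(ι/2 - 1))`, we have `V(t) ≤ Δ` for all
`t ≥ T`; in particular `T` is independent of `V(0)`. -/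
theorem fixed_time_comparison (V : ℝ → ℝ)
    (hdiff : DifferentiableOn ℝ V (Ici 0))
    (hnonneg : ∀ t : ℝ, 0 ≤ t → 0 ≤ V t)
    (κ₁ κ₂ ι C θ : ℝ)
    (hκ₁ : 0 < κ₁) (hκ₂ : 0 < κ₂) (hι : 2 < ι) (hC : 0 ≤ C)
    (hθ₀ : 0 < θ) (hθ₁ : θ < 1)
    (hV' : ∀ t : ℝ, 0 ≤ t →
      derivWithin V (Ici 0) t
        ≤ -κ₁ * V t ^ ((1 : ℝ) / 2) - κ₂ * V t ^ (ι / 2) + C)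
    (Δ T : ℝ)
    (hΔ : Δ = max ((C / (θ * κ₁)) ^ (2 : ℝ)) ((C / (θ * κ₂)) ^ ((2 : ℝ) / ι)))
    (hT : T = 2 / ((1 - θ) * κ₁) + 2 / ((1 - θ) * κ₂ * (ι / 2 - 1))) :
    ∀ t : ℝ, T ≤ t → V t ≤ Δ := by
  have h1θ : 0 < 1 - θ := by linarith
  have hι2 : 0 < ι / 2 - 1 := by linarith
  have hιpos : (0:ℝ) < ι := by linarith
  have hΔ0 : 0 ≤ Δ := by
    rw [hΔ]
    exact le_trans (Real.rpow_nonneg (div_nonneg hC (by positivity)) 2) (le_max_left _ _)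
  set T₁ : ℝ := 2 / ((1 - θ) * κ₁) with hT₁
  set T₂ : ℝ := 2 / ((1 - θ) * κ₂ * (ι / 2 - 1)) with hT₂
  have hT₁pos : 0 < T₁ := by positivity
  have hT₂pos : 0 < T₂ := by positivity
  have hTsum : T = T₁ + T₂ := hT
  have hTpos : 0 < T := by rw [hTsum]; linarith
  -- drift estimate
  have hdrift : ∀ u : ℝ, 0 ≤ u → Δ < V u →
      derivWithin V (Ici 0) u ≤ -(1 - θ) * κ₁ * V u ^ ((1:ℝ)/2) ∧
      derivWithin V (Ici 0) u ≤ -(1 - θ) * κ₂ * V u ^ (ι / 2) := by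
    intro u hu hVu
    have h1 : C ≤ θ * κ₁ * V u ^ ((1:ℝ)/2) := by
      have hbase : 0 ≤ C / (θ * κ₁) := div_nonneg hC (by positivity)
      have hle : (C / (θ * κ₁)) ^ (2:ℝ) ≤ V u :=
        le_of_lt (lt_of_le_of_lt (by rw [hΔ] at hVu ⊢; exact le_max_left _ _) hVu)
      have h2' := Real.rpow_le_rpow (Real.rpow_nonneg hbase 2) hle
        (by norm_num : (0:ℝ) ≤ 1/2)
      rw [← Real.rpow_mul hbase, show (2:ℝ) * (1/2) = 1 by norm_num,
        Real.rpow_one] at h2'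
      calc C = (θ * κ₁) * (C / (θ * κ₁)) := by field_simp
        _ ≤ θ * κ₁ * V u ^ ((1:ℝ)/2) :=
            mul_le_mul_of_nonneg_left h2' (by positivity)
    have h2 : C ≤ θ * κ₂ * V u ^ (ι / 2) := by
      have hbase : 0 ≤ C / (θ * κ₂) := div_nonneg hC (by positivity)
      have hle : (C / (θ * κ₂)) ^ ((2:ℝ)/ι) ≤ V u :=
        le_of_lt (lt_of_le_of_lt (by rw [hΔ] at hVu ⊢; exact le_max_right _ _) hVu)
      have h2' := Real.rpow_le_rpow (Real.rpow_nonneg hbase _) hle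
        (by positivity : (0:ℝ) ≤ ι/2)
      rw [← Real.rpow_mul hbase, show (2:ℝ)/ι * (ι/2) = 1 by field_simp,
        Real.rpow_one] at h2'
      calc C = (θ * κ₂) * (C / (θ * κ₂)) := by field_simp
        _ ≤ θ * κ₂ * V u ^ (ι/2) :=
            mul_le_mul_of_nonneg_left h2' (by positivity)
    have hd := hV' u hu
    have hv1 : 0 ≤ V u ^ ((1:ℝ)/2) := Real.rpow_nonneg (hnonneg u hu) _
    have hv2 : 0 ≤ V u ^ (ι/2) := Real.rpow_nonneg (hnonneg u hu) _
    constructor <;> nlinarith [mul_nonneg hκ₁.le hv1, mul_nonneg hκ₂.le hv2]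
  -- forward invariance
  have hinv : ∀ a b : ℝ, 0 ≤ a → a ≤ b → V a ≤ Δ → V b ≤ Δ := by
    intro a b ha hab hVa
    have hfcont : ContinuousOn V (Icc a b) :=
      hdiff.continuousOn.mono (fun x hx => le_trans ha hx.1)
    have hfderiv : ∀ x ∈ Ico a b, HasDerivWithinAt V (derivWithin V (Ici 0) x) (Ici x) x := by
      intro x hx
      exact ((hdiff x (le_trans ha hx.1)).hasDerivWithinAt).mono
        (Ici_subset_Ici.2 (le_trans ha hx.1))
    have key : ∀ ε : ℝ, 0 < ε → V b ≤ Δ + ε + ε * (b - a) := by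
      intro ε hε
      have hB : ∀ x : ℝ, HasDerivAt (fun x => Δ + ε + ε * (x - a)) ε x := by
        intro x
        simpa using (((hasDerivAt_id x).sub_const a).const_mul ε).const_add (Δ + ε)
      have hbound : ∀ x ∈ Ico a b, V x = Δ + ε + ε * (x - a) →
          derivWithin V (Ici 0) x < ε := by
        intro x hx hfB
        have hxΔ : Δ < V x := by
          rw [hfB]
          have : 0 ≤ x - a := by linarith [hx.1]
          nlinarith
        have hd := (hdrift x (le_trans ha hx.1) hxΔ).2
        have hv2 : 0 ≤ V x ^ (ι/2) := Real.rpow_nonneg (hnonneg x (le_trans ha hx.1)) _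
        nlinarith [mul_nonneg (mul_nonneg h1θ.le hκ₂.le) hv2]
      have := image_le_of_deriv_right_lt_deriv_boundary hfcont hfderiv
        (by simp only [sub_self, mul_zero]; linarith : V a ≤ Δ + ε + ε * (a - a)) hB hbound
        (Set.right_mem_Icc.2 hab)
      simpa using this
    by_contra hcon
    push_neg at hcon
    have hb1 : 0 < 1 + (b - a) := by linarith
    have hεpos : 0 < (V b - Δ) / (2 * (1 + (b - a))) :=
      div_pos (by linarith) (by positivity)
    have hk := key _ hεpos
    have hεval : (V b - Δ) / (2 * (1 + (b - a))) * (1 + (b - a)) = (V b - Δ) / 2 := by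
      field_simp
    nlinarith
  -- existence of a hitting time in [0, T]
  have hexist : ∃ u ∈ Icc (0:ℝ) T, V u ≤ Δ := by
    by_contra hcon
    push_neg at hcon
    have hVpos : ∀ u ∈ Icc (0:ℝ) T, 0 < V u := fun u hu =>
      lt_of_le_of_lt hΔ0 (hcon u hu)
    have hDu : ∀ u ∈ Ioo (0:ℝ) T, HasDerivAt V (derivWithin V (Ici 0) u) u := by
      intro u hu
      exact ((hdiff u hu.1.le).hasDerivWithinAt).hasDerivAt (Ici_mem_nhds hu.1)
    have hT₂T : T₂ ≤ T := by rw [hTsum]; linarith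
    -- Phase A : on [0, T₂], V^{1-ι/2} - r t is monotone
    have hgderiv : ∀ u ∈ Ioo (0:ℝ) T₂,
        HasDerivAt (fun x => V x ^ (1 - ι/2) - (1 - θ) * κ₂ * (ι/2 - 1) * x)
          (derivWithin V (Ici 0) u * (1 - ι/2) * V u ^ (1 - ι/2 - 1)
            - (1 - θ) * κ₂ * (ι/2 - 1)) u := by
      intro u hu
      have huT : u ∈ Ioo (0:ℝ) T := ⟨hu.1, lt_of_lt_of_le hu.2 hT₂T⟩
      have hVu : 0 < V u := hVpos u ⟨huT.1.le, huT.2.le⟩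
      have hW := (hDu u huT).rpow_const (p := 1 - ι/2) (Or.inl (ne_of_gt hVu))
      have h1 := hW.sub ((hasDerivAt_id u).const_mul ((1 - θ) * κ₂ * (ι/2 - 1)))
      rw [mul_one] at h1
      exact h1
    have hgpos : ∀ u ∈ Ioo (0:ℝ) T₂,
        0 ≤ derivWithin V (Ici 0) u * (1 - ι/2) * V u ^ (1 - ι/2 - 1)
            - (1 - θ) * κ₂ * (ι/2 - 1) := by
      intro u hu
      have huT : u ∈ Ioo (0:ℝ) T := ⟨hu.1, lt_of_lt_of_le hu.2 hT₂T⟩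
      have hVu : 0 < V u := hVpos u ⟨huT.1.le, huT.2.le⟩
      have hd := (hdrift u huT.1.le (hcon u ⟨huT.1.le, huT.2.le⟩)).2
      have hneg : (1 - ι/2) * V u ^ (1 - ι/2 - 1) ≤ 0 :=
        (mul_neg_of_neg_of_pos (by linarith) (Real.rpow_pos_of_pos hVu _)).le
      have hmul := mul_le_mul_of_nonpos_left hd hneg
      have hpow : V u ^ (1 - ι/2 - 1) * V u ^ (ι/2) = 1 := by
        rw [← Real.rpow_add hVu, show 1 - ι/2 - 1 + ι/2 = 0 by ring, Real.rpow_zero]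
      have hc : (1 - ι/2) * V u ^ (1 - ι/2 - 1) * (-(1 - θ) * κ₂ * V u ^ (ι/2))
          = (1 - θ) * κ₂ * (ι/2 - 1) := by
        linear_combination (-(1 - ι/2)) * (1 - θ) * κ₂ * hpow
      linarith
    have hWmono : MonotoneOn
        (fun x => V x ^ (1 - ι/2) - (1 - θ) * κ₂ * (ι/2 - 1) * x) (Icc 0 T₂) := by
      apply monotoneOn_of_deriv_nonneg (convex_Icc _ _)
      · apply ContinuousOn.sub
        · exact ContinuousOn.rpow_const
            (hdiff.continuousOn.mono (fun x hx => hx.1))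
            (fun x hx => Or.inl (ne_of_gt (hVpos x ⟨hx.1, le_trans hx.2 hT₂T⟩)))
        · exact (continuous_const.mul continuous_id).continuousOn
      · rw [interior_Icc]
        exact fun u hu => (hgderiv u hu).differentiableAt.differentiableWithinAt
      · rw [interior_Icc]
        intro u hu
        rw [(hgderiv u hu).deriv]
        exact hgpos u hu
    have hmono : V 0 ^ (1 - ι/2) - (1 - θ) * κ₂ * (ι/2 - 1) * 0
        ≤ V T₂ ^ (1 - ι/2) - (1 - θ) * κ₂ * (ι/2 - 1) * T₂ :=
      hWmono ⟨le_rfl, hT₂pos.le⟩ ⟨hT₂pos.le, le_rfl⟩ hT₂pos.le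
    have hrT₂ : (1 - θ) * κ₂ * (ι/2 - 1) * T₂ = 2 := by
      have hne : ((1 - θ) * κ₂ * (ι/2 - 1)) ≠ 0 := ne_of_gt (by positivity)
      rw [hT₂]
      field_simp
      exact div_self (sub_pos.2 hι).ne'
    have hV0p : 0 < V 0 ^ (1 - ι/2) :=
      Real.rpow_pos_of_pos (hVpos 0 ⟨le_rfl, hTpos.le⟩) _
    have hW2 : 2 < V T₂ ^ (1 - ι/2) := by
      rw [mul_zero, sub_zero] at hmono
      linarith
    have hVT₂lt1 : V T₂ < 1 := by
      by_contra hge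
      push_neg at hge
      have := Real.rpow_le_one_of_one_le_of_nonpos hge (by linarith : 1 - ι/2 ≤ 0)
      linarith
    -- Phase B : on [T₂, T], V^{1/2} + s t is antitone
    have hUderiv : ∀ u ∈ Ioo T₂ T,
        HasDerivAt (fun x => V x ^ ((1:ℝ)/2) + (1 - θ) * κ₁ / 2 * x)
          (derivWithin V (Ici 0) u * ((1:ℝ)/2) * V u ^ ((1:ℝ)/2 - 1)
            + (1 - θ) * κ₁ / 2) u := by
      intro u hu
      have huT : u ∈ Ioo (0:ℝ) T := ⟨lt_of_le_of_lt hT₂pos.le hu.1, hu.2⟩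
      have hVu : 0 < V u := hVpos u ⟨huT.1.le, huT.2.le⟩
      have hW := (hDu u huT).rpow_const (p := (1:ℝ)/2) (Or.inl (ne_of_gt hVu))
      have h1 := hW.add ((hasDerivAt_id u).const_mul ((1 - θ) * κ₁ / 2))
      rw [mul_one] at h1
      exact h1
    have hUneg : ∀ u ∈ Ioo T₂ T,
        derivWithin V (Ici 0) u * ((1:ℝ)/2) * V u ^ ((1:ℝ)/2 - 1)
          + (1 - θ) * κ₁ / 2 ≤ 0 := by
      intro u hu
      have huT : u ∈ Ioo (0:ℝ) T := ⟨lt_of_le_of_lt hT₂pos.le hu.1, hu.2⟩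
      have hVu : 0 < V u := hVpos u ⟨huT.1.le, huT.2.le⟩
      have hd := (hdrift u huT.1.le (hcon u ⟨huT.1.le, huT.2.le⟩)).1
      have hposc : 0 ≤ (1:ℝ)/2 * V u ^ ((1:ℝ)/2 - 1) := by positivity
      have hmul := mul_le_mul_of_nonneg_left hd hposc
      have hpow : V u ^ ((1:ℝ)/2 - 1) * V u ^ ((1:ℝ)/2) = 1 := by
        rw [← Real.rpow_add hVu, show (1:ℝ)/2 - 1 + 1/2 = 0 by ring, Real.rpow_zero]
      have hc : (1:ℝ)/2 * V u ^ ((1:ℝ)/2 - 1) * (-(1 - θ) * κ₁ * V u ^ ((1:ℝ)/2))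
          = -((1 - θ) * κ₁ / 2) := by
        linear_combination (-(1:ℝ)/2) * (1 - θ) * κ₁ * hpow
      linarith
    have hUanti : AntitoneOn
        (fun x => V x ^ ((1:ℝ)/2) + (1 - θ) * κ₁ / 2 * x) (Icc T₂ T) := by
      apply antitoneOn_of_deriv_nonpos (convex_Icc _ _)
      · apply ContinuousOn.add
        · exact ContinuousOn.rpow_const
            (hdiff.continuousOn.mono (fun x hx => le_trans hT₂pos.le hx.1))
            (fun x hx => Or.inl (ne_of_gt (hVpos x ⟨le_trans hT₂pos.le hx.1, hx.2⟩)))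
        · exact (continuous_const.mul continuous_id).continuousOn
      · rw [interior_Icc]
        exact fun u hu => (hUderiv u hu).differentiableAt.differentiableWithinAt
      · rw [interior_Icc]
        intro u hu
        rw [(hUderiv u hu).deriv]
        exact hUneg u hu
    have hanti : V T ^ ((1:ℝ)/2) + (1 - θ) * κ₁ / 2 * T
        ≤ V T₂ ^ ((1:ℝ)/2) + (1 - θ) * κ₁ / 2 * T₂ :=
      hUanti ⟨le_rfl, hT₂T⟩ ⟨hT₂T, le_rfl⟩ hT₂T
    have hsT₁ : (1 - θ) * κ₁ / 2 * (T - T₂) = 1 := by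
      have hne : ((1 - θ) * κ₁) ≠ 0 := ne_of_gt (by positivity)
      rw [hTsum, hT₁]
      field_simp
      ring
    have hUT₂ : V T₂ ^ ((1:ℝ)/2) < 1 :=
      Real.rpow_lt_one (hnonneg T₂ hT₂pos.le) hVT₂lt1 (by norm_num)
    have hUT : 0 ≤ V T ^ ((1:ℝ)/2) := Real.rpow_nonneg (hnonneg T hTpos.le) _
    nlinarith
  intro t ht
  obtain ⟨u, hu, hVu⟩ := hexist
  exact hinv u t hu.1 (le_trans hu.2 ht) hVu
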